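/- arXiv:1601.07604 — 2 statements merged into one kernel-verified Lean document; each statement's English description precedes it below -/
import Mathlib

section
/- Let ≺ be a monomial order on S = K[t_1,…,t_s], let I ⊂ S be an ideal, and let f be a polynomial of S of positive degree. If the leading monomial in_≺(f) is a regular element (non-zero-divisor) on S/in_≺(I), then f is a regular element on S/I. -/
open MvPolynomial Finsupp Filter

namespace MDF

open scoped Classical

variable (K : Type*) [Field K] (s : ℕ)

/-- The Hilbert function of `S/I` in degree `d`: `dim_K (S_d / I_d)`. -/
noncomputable def hilbertFn (I : Ideal (MvPolynomial (Fin s) K)) (d : ℕ) : ℕ :=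
  Module.finrank K
    ((homogeneousSubmodule (Fin s) K d) ⧸
      (Submodule.comap (homogeneousSubmodule (Fin s) K d).subtype (I.restrictScalars K)))

/-- The Krull dimension of `S/I`, as a natural number. -/
noncomputable def krullDimQ (I : Ideal (MvPolynomial (Fin s) K)) : ℕ :=
  (WithTop.untopD 0 (WithBot.unbotD 0 (ringKrullDim (MvPolynomial (Fin s) K ⧸ I))))

/-- The degree (multiplicity) of `S/I`: if `k = dim (S/I) ≥ 1`, it is
`(k-1)! · lim_d H_I(d)/d^(k-1)`, and it is `dim_K (S/I)` if `k = 0`. -/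
noncomputable def degQ (I : Ideal (MvPolynomial (Fin s) K)) : ℕ :=
  if krullDimQ K s I = 0 then Module.finrank K (MvPolynomial (Fin s) K ⧸ I)
  else Classical.epsilon (fun D : ℕ =>
    Tendsto (fun d : ℕ => (hilbertFn K s I d : ℝ) / (d : ℝ) ^ (krullDimQ K s I - 1)) atTop
      (nhds ((D : ℝ) / (Nat.factorial (krullDimQ K s I - 1)))))

/-- The regularity of the Hilbert function of `S/I`: the least `r ≥ 0` from which the
Hilbert function agrees with a polynomial (necessarily the Hilbert polynomial). -/
noncomputable def regQ (I : Ideal (MvPolynomial (Fin s) K)) : ℕ :=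
  sInf { r : ℕ | ∃ P : Polynomial ℚ, ∀ d : ℕ, r ≤ d → (hilbertFn K s I d : ℚ) = P.eval (d : ℚ) }

/-- The height of an ideal: the infimum of the heights of the primes containing it. -/
noncomputable def heightQ (I : Ideal (MvPolynomial (Fin s) K)) : ℕ∞ :=
  ⨅ p ∈ { p : PrimeSpectrum (MvPolynomial (Fin s) K) | I ≤ p.asIdeal }, Order.height p

/-- An ideal is a complete intersection if it can be generated by `ht(I)` elements. -/
def IsCompleteIntersection (I : Ideal (MvPolynomial (Fin s) K)) : Prop :=
  ∃ (n : ℕ) (f : Fin n → MvPolynomial (Fin s) K),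
    (n : ℕ∞) = heightQ K s I ∧ I = Ideal.span (Set.range f)

/-- An ideal is unmixed if all its associated primes have the same height. -/
def IsUnmixed (I : Ideal (MvPolynomial (Fin s) K)) : Prop :=
  ∀ p ∈ associatedPrimes (MvPolynomial (Fin s) K) (MvPolynomial (Fin s) K ⧸ I),
    ∀ q ∈ associatedPrimes (MvPolynomial (Fin s) K) (MvPolynomial (Fin s) K ⧸ I),
      heightQ K s p = heightQ K s q

/-- A graded (homogeneous) ideal: it contains all homogeneous components of its elements. -/
def IsGradedIdeal (I : Ideal (MvPolynomial (Fin s) K)) : Prop :=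
  ∀ f ∈ I, ∀ n : ℕ, homogeneousComponent n f ∈ I

variable {K s} in
/-- A graded monomial order: one refining the total degree. -/
def IsGradedOrder (m : MonomialOrder (Fin s)) : Prop :=
  ∀ a b : Fin s →₀ ℕ, a.degree < b.degree → m.toSyn a < m.toSyn b

variable {s} in
/-- The leading exponent (exponent of the leading monomial) of a polynomial with respect
to a monomial order.  (It is `0` by convention for the zero polynomial.) -/
noncomputable def lExp (m : MonomialOrder (Fin s)) (f : MvPolynomial (Fin s) K) :
    Fin s →₀ ℕ :=
  m.toSyn.symm (f.support.sup (fun a => m.toSyn a))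

variable {s} in
/-- The initial ideal of `I`: the ideal generated by the leading monomials of the nonzero
elements of `I`. -/
noncomputable def initIdeal (m : MonomialOrder (Fin s)) (I : Ideal (MvPolynomial (Fin s) K)) :
    Ideal (MvPolynomial (Fin s) K) :=
  Ideal.span { g | ∃ f ∈ I, f ≠ 0 ∧ g = monomial (lExp K m f) (1 : K) }

variable {s} in
/-- `f` is (or represents) a zero divisor of `S/I`. -/
def IsZeroDivOn (I : Ideal (MvPolynomial (Fin s) K)) (f : MvPolynomial (Fin s) K) : Prop :=
  ∃ g, g ∉ I ∧ f * g ∈ I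

variable {s} in
/-- The set `M_{≺,d}` of exponents of the standard monomials of degree `d` that are
zero divisors of `S/in_≺(I)`. -/
noncomputable def Mset (m : MonomialOrder (Fin s)) (I : Ideal (MvPolynomial (Fin s) K))
    (d : ℕ) : Set (Fin s →₀ ℕ) :=
  { a | a.degree = d ∧ monomial a (1 : K) ∉ initIdeal K m I ∧
      IsZeroDivOn K (initIdeal K m I) (monomial a (1 : K)) }

variable {s} in
/-- The set `F_{≺,d}` of nonzero zero divisors of `S/I` which are `K`-linear combinations
of standard monomials of degree `d`. -/
noncomputable def Fset (m : MonomialOrder (Fin s)) (I : Ideal (MvPolynomial (Fin s) K))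
    (d : ℕ) : Set (MvPolynomial (Fin s) K) :=
  { f | f ≠ 0 ∧ (∀ a ∈ f.support, a.degree = d ∧ monomial a (1 : K) ∉ initIdeal K m I) ∧
      IsZeroDivOn K I f }

variable {s} in
/-- The footprint function `fp_I`. -/
noncomputable def fp (m : MonomialOrder (Fin s)) (I : Ideal (MvPolynomial (Fin s) K))
    (d : ℕ) : ℤ :=
  if (Mset K m I d).Nonempty then
    (degQ K s I : ℤ) -
      sSup ((fun a => (degQ K s (initIdeal K m I ⊔ Ideal.span {monomial a (1 : K)}) : ℤ)) ''
        Mset K m I d)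
  else (degQ K s I : ℤ)

variable {s} in
/-- The minimum distance function `δ_I`. -/
noncomputable def delta (m : MonomialOrder (Fin s)) (I : Ideal (MvPolynomial (Fin s) K))
    (d : ℕ) : ℤ :=
  if (Fset K m I d).Nonempty then
    (degQ K s I : ℤ) -
      sSup ((fun f => (degQ K s (I ⊔ Ideal.span {f}) : ℤ)) '' Fset K m I d)
  else (degQ K s I : ℤ)

variable {s} in
/-- The vanishing ideal of a set of points of projective space: the ideal generated by
the homogeneous polynomials vanishing at (representatives of) all points of `X`. -/
noncomputable def vanishingIdeal (X : Set (Projectivization K (Fin s → K))) :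
    Ideal (MvPolynomial (Fin s) K) :=
  Ideal.span { f | (∃ n, f.IsHomogeneous n) ∧ ∀ p ∈ X, eval p.rep f = 0 }

variable {s} in
/-- The set of zeros in `X` of a (homogeneous) polynomial `f`. -/
def VX (X : Set (Projectivization K (Fin s → K))) (f : MvPolynomial (Fin s) K) :
    Set (Projectivization K (Fin s → K)) :=
  { p ∈ X | eval p.rep f = 0 }


section Aux

variable {K : Type*} [Field K] {s : ℕ} (m : MonomialOrder (Fin s))

lemma lExp_mem_support {f : MvPolynomial (Fin s) K} (hf : f ≠ 0) :
    lExp K m f ∈ f.support := by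
  obtain ⟨b, hb, hb2⟩ := Finset.exists_mem_eq_sup f.support
    (by simpa using hf) (fun a => m.toSyn a)
  rw [lExp, hb2, AddEquiv.symm_apply_apply]
  exact hb

lemma coeff_lExp_ne_zero {f : MvPolynomial (Fin s) K} (hf : f ≠ 0) :
    f.coeff (lExp K m f) ≠ 0 :=
  MvPolynomial.mem_support_iff.mp (lExp_mem_support m hf)

lemma le_lExp {f : MvPolynomial (Fin s) K} {a : Fin s →₀ ℕ} (ha : a ∈ f.support) :
    m.toSyn a ≤ m.toSyn (lExp K m f) := by
  rw [lExp, AddEquiv.apply_symm_apply]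
  exact Finset.le_sup (f := fun a => m.toSyn a) ha

lemma lExp_monomial {a : Fin s →₀ ℕ} {c : K} (hc : c ≠ 0) :
    lExp K m (monomial a c) = a := by
  rw [lExp, support_monomial, if_neg hc]
  simp

lemma supDegree_eq (f : MvPolynomial (Fin s) K) :
    AddMonoidAlgebra.supDegree ⇑m.toSyn f = m.toSyn (lExp K m f) := by
  rw [lExp, AddEquiv.apply_symm_apply]
  rfl

lemma leadingCoeff_eq (f : MvPolynomial (Fin s) K) :
    AddMonoidAlgebra.leadingCoeff ⇑m.toSyn f = f.coeff (lExp K m f) := by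
  rw [AddMonoidAlgebra.leadingCoeff, supDegree_eq,
    Function.leftInverse_invFun m.toSyn.injective]
  rfl

lemma lExp_mul {f g : MvPolynomial (Fin s) K} (hf : f ≠ 0) (hg : g ≠ 0) :
    lExp K m (f * g) = lExp K m f + lExp K m g := by
  have hpq : AddMonoidAlgebra.leadingCoeff ⇑m.toSyn f *
      AddMonoidAlgebra.leadingCoeff ⇑m.toSyn g ≠ 0 := by
    rw [leadingCoeff_eq, leadingCoeff_eq]
    exact mul_ne_zero (coeff_lExp_ne_zero m hf) (coeff_lExp_ne_zero m hg)
  have h := AddMonoidAlgebra.supDegree_mul m.toSyn.injective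
    (fun a b => map_add m.toSyn a b) hpq hf hg
  apply m.toSyn.injective
  rw [map_add, ← supDegree_eq m (f * g), ← supDegree_eq m f, ← supDegree_eq m g]
  exact h

lemma coeff_lExp_mul (f g : MvPolynomial (Fin s) K) :
    (f * g).coeff (lExp K m (f * g)) = f.coeff (lExp K m f) * g.coeff (lExp K m g) := by
  rw [← leadingCoeff_eq, ← leadingCoeff_eq, ← leadingCoeff_eq]
  exact AddMonoidAlgebra.leadingCoeff_mul m.toSyn.injective
    (fun a b => map_add m.toSyn a b)

lemma lExp_sub_lt {g h : MvPolynomial (Fin s) K} (hgh : g - h ≠ 0)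
    (h1 : lExp K m h = lExp K m g)
    (h2 : g.coeff (lExp K m g) = h.coeff (lExp K m g)) :
    m.toSyn (lExp K m (g - h)) < m.toSyn (lExp K m g) := by
  have hmem := lExp_mem_support m hgh
  rw [MvPolynomial.mem_support_iff, MvPolynomial.coeff_sub] at hmem
  have hne : lExp K m (g - h) ≠ lExp K m g := by
    intro he
    rw [he, h2, sub_self] at hmem
    exact hmem rfl
  have hle : m.toSyn (lExp K m (g - h)) ≤ m.toSyn (lExp K m g) := by
    rcases ne_or_eq (g.coeff (lExp K m (g - h))) 0 with hc | hc
    · exact le_lExp m (MvPolynomial.mem_support_iff.mpr hc)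
    · have hc' : h.coeff (lExp K m (g - h)) ≠ 0 := by
        intro h0; rw [hc, h0, sub_self] at hmem; exact hmem rfl
      rw [← h1]
      exact le_lExp m (MvPolynomial.mem_support_iff.mpr hc')
  exact lt_of_le_of_ne hle (fun he => hne (m.toSyn.injective he))

lemma mem_of_mul_mem {I : Ideal (MvPolynomial (Fin s) K)} {f : MvPolynomial (Fin s) K}
    (hf0 : f ≠ 0)
    (hreg : ∀ x : MvPolynomial (Fin s) K,
      monomial (lExp K m f) (1 : K) * x ∈ initIdeal K m I → x ∈ initIdeal K m I)
    (g : MvPolynomial (Fin s) K) (hg : f * g ∈ I) : g ∈ I := by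
  have main : ∀ v : m.syn, ∀ g : MvPolynomial (Fin s) K,
      m.toSyn (lExp K m g) = v → f * g ∈ I → g ∈ I := by
    intro v
    induction v using WellFoundedLT.induction with
    | _ v ih =>
    intro g hv hg
    subst hv
    rcases eq_or_ne g 0 with rfl | hg0
    · exact I.zero_mem
    -- the leading monomial of `g` lies in the initial ideal
    have hfg0 : f * g ≠ 0 := mul_ne_zero hf0 hg0
    have hfgmem : monomial (lExp K m (f * g)) (1 : K) ∈ initIdeal K m I :=
      Ideal.subset_span ⟨f * g, hg, hfg0, rfl⟩
    have hmono : monomial (lExp K m g) (1 : K) ∈ initIdeal K m I := by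
      apply hreg
      rw [MvPolynomial.monomial_mul, mul_one, ← lExp_mul m hf0 hg0]
      exact hfgmem
    -- hence there is `h ∈ I`, `h ≠ 0`, with `lExp h ≤ lExp g`
    have hset : { g' | ∃ p ∈ I, p ≠ 0 ∧ g' = monomial (lExp K m p) (1 : K) } =
        (fun a => monomial a (1 : K)) '' { a | ∃ p ∈ I, p ≠ 0 ∧ lExp K m p = a } := by
      ext x
      constructor
      · rintro ⟨p, hpI, hp0, rfl⟩
        exact ⟨lExp K m p, ⟨p, hpI, hp0, rfl⟩, rfl⟩
      · rintro ⟨a, ⟨p, hpI, hp0, rfl⟩, rfl⟩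
        exact ⟨p, hpI, hp0, rfl⟩
    rw [initIdeal, hset, mem_ideal_span_monomial_image] at hmono
    obtain ⟨a, ⟨p, hpI, hp0, rfl⟩, hle⟩ := hmono (lExp K m g) (by
      rw [support_monomial, if_neg (one_ne_zero (α := K))]; exact Finset.mem_singleton_self _)
    obtain ⟨b, hb⟩ := le_iff_exists_add.mp hle
    -- build `h' ∈ I` with the same leading term as `g`
    set c : K := g.coeff (lExp K m g) / p.coeff (lExp K m p) with hc
    have hpc : p.coeff (lExp K m p) ≠ 0 := coeff_lExp_ne_zero m hp0
    have hc0 : c ≠ 0 := div_ne_zero (coeff_lExp_ne_zero m hg0) hpc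
    set h' : MvPolynomial (Fin s) K := monomial b c * p with hh'
    have hh'I : h' ∈ I := Ideal.mul_mem_left I _ hpI
    have hh'0 : h' ≠ 0 := mul_ne_zero (fun h0 => hc0 (by
      simpa using (MvPolynomial.monomial_eq_zero.mp h0))) hp0
    have hlexph' : lExp K m h' = lExp K m g := by
      rw [hh', lExp_mul m (fun h0 => hc0 (MvPolynomial.monomial_eq_zero.mp h0)) hp0,
        lExp_monomial m hc0, hb, add_comm]
    have hcoeffh' : g.coeff (lExp K m g) = h'.coeff (lExp K m g) := by
      conv_rhs => rw [← hlexph']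
      rw [hh', coeff_lExp_mul m, lExp_monomial m hc0, MvPolynomial.coeff_monomial,
        if_pos rfl, hc, div_mul_cancel₀ _ hpc]
    rcases eq_or_ne (g - h') 0 with hdz | hdz
    · rw [sub_eq_zero] at hdz
      rw [hdz]; exact hh'I
    · have hlt := lExp_sub_lt m hdz hlexph' hcoeffh'
      have hfI : f * (g - h') ∈ I := by
        rw [mul_sub]
        exact I.sub_mem hg (Ideal.mul_mem_left I f hh'I)
      have := ih _ hlt (g - h') rfl hfI
      have : g = (g - h') + h' := by ring
      rw [this]
      exact I.add_mem (ih _ hlt (g - h') rfl hfI) hh'I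
  exact main _ g rfl hg

end Aux

/-- If the leading monomial of `f` is a regular element (non-zero-divisor)
on `S/in_≺(I)`, then `f` is a regular element on `S/I`. -/
theorem regular_of_leadingMonomial_regular
    {K : Type*} [Field K] {s : ℕ} (m : MonomialOrder (Fin s))
    (I : Ideal (MvPolynomial (Fin s) K)) (f : MvPolynomial (Fin s) K)
    (hf : 0 < f.totalDegree)
    (hreg : Function.Injective (fun g : MvPolynomial (Fin s) K ⧸ initIdeal K m I =>
      Ideal.Quotient.mk (initIdeal K m I) (monomial (lExp K m f) (1 : K)) * g)) :
    Function.Injective (fun g : MvPolynomial (Fin s) K ⧸ I =>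
      Ideal.Quotient.mk I f * g) := by
  have hf0 : f ≠ 0 := by
    intro h
    rw [h, totalDegree_zero] at hf
    exact lt_irrefl 0 hf
  have hreg' : ∀ x : MvPolynomial (Fin s) K,
      monomial (lExp K m f) (1 : K) * x ∈ initIdeal K m I → x ∈ initIdeal K m I := by
    intro x hx
    have h1 : Ideal.Quotient.mk (initIdeal K m I) (monomial (lExp K m f) (1 : K)) *
        Ideal.Quotient.mk (initIdeal K m I) x =
        Ideal.Quotient.mk (initIdeal K m I) (monomial (lExp K m f) (1 : K)) * 0 := by
      rw [mul_zero, ← map_mul, Ideal.Quotient.eq_zero_iff_mem]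
      exact hx
    have := hreg h1
    rwa [← Ideal.Quotient.eq_zero_iff_mem]
  intro x y hxy
  obtain ⟨a, rfl⟩ := Ideal.Quotient.mk_surjective x
  obtain ⟨b, rfl⟩ := Ideal.Quotient.mk_surjective y
  simp only [← map_mul] at hxy
  have hsub : f * (a - b) ∈ I := by
    rw [mul_sub, ← Ideal.Quotient.eq_zero_iff_mem, map_sub, sub_eq_zero]
    exact hxy
  have hab : a - b ∈ I := mem_of_mul_mem m hf0 hreg' _ hsub
  rw [← sub_eq_zero, ← map_sub, Ideal.Quotient.eq_zero_iff_mem]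
  exact hab

end MDF
end

section
/- Let L be the ideal of S = K[t_1,…,t_s] generated by t_2^{d_2},…,t_s^{d_s}. If t^a = t_1^{a_1} t_r^{a_r} ⋯ t_s^{a_s} is a monomial with r ≥ 2, a_r ≥ 1, and a_i ≤ d_i − 1 for all i ≥ r (and a_i = 0 for 2 ≤ i < r), then deg(S/(L, t^a)) = deg(S/(L, t_r^{a_r} ⋯ t_s^{a_s})) = d_2 ⋯ d_s − d_2 ⋯ d_{r−1}(d_r − a_r) ⋯ (d_s − a_s). -/
open MvPolynomial Finsupp Filter

namespace MDF

open scoped Classical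

variable (K : Type*) [Field K] (s : ℕ)

section Aux
variable {K s}

/-- standard monomials of degree d -/
noncomputable def stdF (G : Set (Fin s →₀ ℕ)) (d : ℕ) : Finset (Fin s →₀ ℕ) :=
  (Finset.finsuppAntidiag Finset.univ d).filter (fun x => ¬ ∃ e ∈ G, e ≤ x)

lemma sum_univ_eq_degree (a : Fin s →₀ ℕ) : Finset.univ.sum a = a.degree := by
  rw [Finsupp.degree]
  exact (Finset.sum_subset (Finset.subset_univ _)
    (fun i _ hi => Finsupp.notMem_support_iff.mp hi)).symm

lemma mem_stdF {G : Set (Fin s →₀ ℕ)} {d : ℕ} {a : Fin s →₀ ℕ} :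
    a ∈ stdF G d ↔ a.degree = d ∧ ¬ ∃ e ∈ G, e ≤ a := by
  simp [stdF, Finset.mem_finsuppAntidiag, sum_univ_eq_degree]

theorem hilbertFn_span_monomials (G : Set (Fin s →₀ ℕ)) (d : ℕ) :
    hilbertFn K s (Ideal.span ((fun e => monomial e (1 : K)) '' G)) d = (stdF G d).card := by
  set I := Ideal.span ((fun e => monomial e (1 : K)) '' G) with hI
  let Φ : (homogeneousSubmodule (Fin s) K d) →ₗ[K] ((stdF G d) → K) :=
    { toFun := fun f x => coeff x.1 f.1
      map_add' := by intros; ext; simp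
      map_smul' := by intros; ext; simp }
  have hΦ : ∀ (f : homogeneousSubmodule (Fin s) K d) x, Φ f x = coeff x.1 f.1 := fun _ _ => rfl
  have hker : LinearMap.ker Φ =
      Submodule.comap (homogeneousSubmodule (Fin s) K d).subtype (I.restrictScalars K) := by
    ext f
    simp only [LinearMap.mem_ker, Submodule.mem_comap, Submodule.coe_subtype,
      Submodule.restrictScalars_mem, _root_.funext_iff, hΦ, Pi.zero_apply]
    constructor
    · intro h
      rw [hI, mem_ideal_span_monomial_image]
      intro a ha
      by_contra hna
      have hdeg : a.degree = d := by
        rw [Finsupp.degree_eq_weight_one]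
        exact f.2 (MvPolynomial.mem_support_iff.mp ha)
      have hstd : (⟨a, mem_stdF.mpr ⟨hdeg, hna⟩⟩ : (stdF G d : Set _)) ∈ (stdF G d).attach :=
        Finset.mem_attach _ _
      exact (MvPolynomial.mem_support_iff.mp ha) (h ⟨a, mem_stdF.mpr ⟨hdeg, hna⟩⟩)
    · intro hf x
      by_contra hc
      have hx := (mem_stdF.mp x.2).2
      exact hx ((mem_ideal_span_monomial_image.mp (hI ▸ hf)) x.1 (MvPolynomial.mem_support_iff.mpr hc))
  have hsurj : Function.Surjective Φ := by
    intro g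
    have hf : (∑ x ∈ (stdF G d).attach, monomial x.1 (g x)) ∈ homogeneousSubmodule (Fin s) K d := by
      refine Submodule.sum_mem _ fun x _ => ?_
      rw [mem_homogeneousSubmodule]
      exact isHomogeneous_monomial _ (mem_stdF.mp x.2).1
    refine ⟨⟨_, hf⟩, ?_⟩
    ext x
    rw [hΦ]
    simp only [coeff_sum, coeff_monomial]
    rw [Finset.sum_eq_single x]
    · simp
    · intro y _ hyx
      rw [if_neg]
      intro h; exact hyx (Subtype.ext h)
    · intro h; exact absurd (Finset.mem_attach _ _) h
  have e := (LinearMap.quotKerEquivOfSurjective Φ hsurj)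
  rw [hker] at e
  rw [hilbertFn, e.finrank_eq, Module.finrank_fintype_fun_eq_card, Fintype.card_coe]

lemma count_box [NeZero s] (lo hi : Fin s → ℕ)
    (h1 : ∀ i : Fin s, (i : ℕ) ≠ 0 → lo i < hi i)
    {d : ℕ}
    (hd : lo 0 + ∑ i ∈ Finset.univ.filter (fun i : Fin s => (i : ℕ) ≠ 0), (hi i - 1) ≤ d) :
    ((Finset.finsuppAntidiag Finset.univ d).filter
      (fun x => (∀ i : Fin s, (i : ℕ) ≠ 0 → lo i ≤ x i ∧ x i < hi i) ∧ lo 0 ≤ x 0)).card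
    = ∏ i ∈ Finset.univ.filter (fun i : Fin s => (i : ℕ) ≠ 0), (hi i - lo i) := by
  set P := {i : Fin s // (i : ℕ) ≠ 0} with hP
  have hmem : ∀ i : Fin s, i ∈ Finset.univ.filter (fun i : Fin s => (i : ℕ) ≠ 0)
      ↔ (i : ℕ) ≠ 0 := by intro i; simp
  have hzero : ∀ i : Fin s, (i : ℕ) = 0 ↔ i = 0 := by
    intro i; exact Fin.val_eq_zero_iff
  have hsplit : ∀ x : Fin s →₀ ℕ, (∑ i, x i) = x 0 + ∑ j : P, x j.1 := by
    intro x
    rw [Fintype.sum_eq_add_sum_compl (0 : Fin s)]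
    congr 1
    rw [← Finset.sum_subtype (Finset.univ.filter (fun i : Fin s => (i : ℕ) ≠ 0)) hmem (fun i => x i)]
    apply Finset.sum_congr _ (fun _ _ => rfl)
    ext i
    simp
  have hsum_le : ∀ t : (∀ j : P, Fin (hi j.1 - lo j.1)),
      (∑ j : P, (lo j.1 + (t j : ℕ))) + lo 0 ≤ d := by
    intro t
    have hb : ∀ j : P, lo j.1 + (t j : ℕ) ≤ hi j.1 - 1 := by
      intro j
      have h2 := (t j).2
      have := h1 j.1 j.2
      omega
    calc (∑ j : P, (lo j.1 + (t j : ℕ))) + lo 0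
        ≤ (∑ j : P, (hi j.1 - 1)) + lo 0 := by
          gcongr with j; exact hb j
      _ ≤ d := by
          rw [← Finset.sum_subtype (Finset.univ.filter (fun i : Fin s => (i : ℕ) ≠ 0)) hmem
            (fun i => hi i - 1)]
          omega
  rw [show ∏ i ∈ Finset.univ.filter (fun i : Fin s => (i : ℕ) ≠ 0), (hi i - lo i)
      = Fintype.card (∀ j : P, Fin (hi j.1 - lo j.1)) by
    rw [Fintype.card_pi]
    simp only [Fintype.card_fin]
    exact Finset.prod_subtype _ hmem (fun i => hi i - lo i)]
  rw [← Finset.card_univ]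
  refine Finset.card_bij'
    (fun x hx => (fun j : P => (⟨x j.1 - lo j.1, by
      rcases Finset.mem_filter.mp hx with ⟨_, hx1, _⟩
      have := hx1 j.1 j.2
      omega⟩ : Fin (hi j.1 - lo j.1))))
    (fun (t : ∀ j : P, Fin (hi j.1 - lo j.1)) _ => Finsupp.equivFunOnFinite.symm
      (fun i : Fin s => if h : (i : ℕ) = 0 then d - ∑ j : P, (lo j.1 + (t j : ℕ))
        else lo i + (t ⟨i, h⟩ : ℕ))) ?_ ?_ ?_ ?_
  · intro x hx; exact Finset.mem_univ _
  · -- j maps into the filter set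
    intro t _
    have h0 : (Finsupp.equivFunOnFinite.symm
      (fun i : Fin s => if h : (i : ℕ) = 0 then d - ∑ j : P, (lo j.1 + (t j : ℕ))
        else lo i + (t ⟨i, h⟩ : ℕ))) 0 = d - ∑ j : P, (lo j.1 + (t j : ℕ)) := by
      simp only [Finsupp.coe_equivFunOnFinite_symm]
      rw [dif_pos (by simp)]
    refine Finset.mem_filter.mpr ⟨?_, ?_, ?_⟩
    · rw [Finset.mem_finsuppAntidiag]
      refine ⟨?_, Finset.subset_univ _⟩
      rw [hsplit, h0]
      simp only [Finsupp.coe_equivFunOnFinite_symm]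
      have heq : ∀ j : P, (if h : (j.1 : ℕ) = 0 then d - ∑ j : P, (lo j.1 + (t j : ℕ))
          else lo j.1 + (t ⟨j.1, h⟩ : ℕ)) = lo j.1 + (t j : ℕ) := by
        intro j; rw [dif_neg j.2]
      rw [Finset.sum_congr rfl (fun j _ => heq j)]
      have := hsum_le t
      omega
    · intro i hi0
      simp only [Finsupp.coe_equivFunOnFinite_symm, dif_neg hi0]
      have h2 : (t ⟨i, hi0⟩ : ℕ) < hi i - lo i := (t ⟨i, hi0⟩).2
      have := h1 i hi0
      constructor <;> omega
    · rw [h0]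
      have := hsum_le t
      omega
  · -- left inverse
    intro x hx
    rcases Finset.mem_filter.mp hx with ⟨hxa, hx1, hx2⟩
    rw [Finset.mem_finsuppAntidiag] at hxa
    ext i
    simp only [Finsupp.coe_equivFunOnFinite_symm]
    by_cases h : (i : ℕ) = 0
    · rw [dif_pos h]
      have hi0 : i = 0 := (hzero i).mp h
      subst hi0
      have hsum : (∑ i, x i) = d := hxa.1
      rw [hsplit] at hsum
      have heq : ∀ j : P, lo j.1 + (((⟨x j.1 - lo j.1, by
          have := hx1 j.1 j.2; omega⟩ : Fin (hi j.1 - lo j.1))) : ℕ) = x j.1 := by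
        intro j
        have := hx1 j.1 j.2
        show lo j.1 + (x j.1 - lo j.1) = x j.1
        omega
      rw [Finset.sum_congr rfl (fun j _ => heq j)]
      omega
    · rw [dif_neg h]
      have := hx1 i h
      show lo i + (x i - lo i) = x i
      omega
  · -- right inverse
    intro t _
    funext j
    apply Fin.ext
    simp only [Finsupp.coe_equivFunOnFinite_symm, dif_neg j.2]
    show lo j.1 + (t j : ℕ) - lo j.1 = (t j : ℕ)
    omega

lemma card_stdF [NeZero s] (dd : Fin s → ℕ)
    (b : Fin s →₀ ℕ) (hb : ∀ i : Fin s, (i : ℕ) ≠ 0 → b i < dd i)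
    {d : ℕ}
    (hd : b 0 + ∑ i ∈ Finset.univ.filter (fun i : Fin s => (i : ℕ) ≠ 0), (dd i - 1) ≤ d) :
    (stdF ({e | ∃ i : Fin s, (i : ℕ) ≠ 0 ∧ e = Finsupp.single i (dd i)} ∪ {b}) d).card
      = ∏ i ∈ Finset.univ.filter (fun i : Fin s => (i : ℕ) ≠ 0), dd i
        - ∏ i ∈ Finset.univ.filter (fun i : Fin s => (i : ℕ) ≠ 0), (dd i - b i) := by
  have hzero : ∀ i : Fin s, (i : ℕ) = 0 ↔ i = 0 := by
    intro i; exact Fin.val_eq_zero_iff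
  set A := ((Finset.finsuppAntidiag Finset.univ d).filter
      (fun x => (∀ i : Fin s, (i : ℕ) ≠ 0 → (fun _ : Fin s => 0) i ≤ x i ∧ x i < dd i) ∧
        (fun _ : Fin s => 0) 0 ≤ x 0)) with hA
  set B := ((Finset.finsuppAntidiag Finset.univ d).filter
      (fun x => (∀ i : Fin s, (i : ℕ) ≠ 0 → (⇑b) i ≤ x i ∧ x i < dd i) ∧ (⇑b) 0 ≤ x 0)) with hB
  have hBA : B ⊆ A := by
    intro x hx
    rcases Finset.mem_filter.mp hx with ⟨h1, h2, h3⟩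
    exact Finset.mem_filter.mpr ⟨h1, fun i hi => ⟨Nat.zero_le _, (h2 i hi).2⟩, Nat.zero_le _⟩
  have hset : stdF ({e | ∃ i : Fin s, (i : ℕ) ≠ 0 ∧ e = Finsupp.single i (dd i)} ∪ {b}) d
      = A \ B := by
    ext x
    simp only [stdF, Finset.mem_sdiff, Finset.mem_filter, hA, hB, Set.mem_union,
      Set.mem_setOf_eq, Set.mem_singleton_iff]
    constructor
    · rintro ⟨hant, hstd⟩
      have hlt : ∀ i : Fin s, (i : ℕ) ≠ 0 → x i < dd i := by
        intro i hi
        by_contra hc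
        exact hstd ⟨Finsupp.single i (dd i), Or.inl ⟨i, hi, rfl⟩,
          Finsupp.single_le_iff.mpr (by omega)⟩
      refine ⟨⟨hant, fun i hi => ⟨Nat.zero_le _, hlt i hi⟩, Nat.zero_le _⟩, ?_⟩
      rintro ⟨-, h2, h3⟩
      refine hstd ⟨b, Or.inr rfl, Finsupp.le_def.mpr fun i => ?_⟩
      by_cases h : (i : ℕ) = 0
      · rw [(hzero i).mp h]; exact h3
      · exact (h2 i h).1
    · rintro ⟨⟨hant, h2, -⟩, hnB⟩
      refine ⟨hant, ?_⟩
      rintro ⟨e, he, hle⟩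
      rcases he with ⟨i, hi, rfl⟩ | rfl
      · have := Finsupp.single_le_iff.mp hle
        have := (h2 i hi).2
        omega
      · exact hnB ⟨hant, fun i hi => ⟨Finsupp.le_def.mp hle i, (h2 i hi).2⟩,
          Finsupp.le_def.mp hle 0⟩
  rw [hset, Finset.card_sdiff_of_subset hBA, hA, hB]
  rw [count_box (fun _ => 0) dd
    (fun i hi => Nat.lt_of_le_of_lt (Nat.zero_le (b i)) (hb i hi))
    (by show (0 : ℕ) + ∑ i ∈ Finset.univ.filter (fun i : Fin s => (i : ℕ) ≠ 0), (dd i - 1) ≤ d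
        omega)]
  rw [count_box (⇑b) dd hb (by exact hd)]
  simp

/-- substitution killing all variables but the 0-th -/
noncomputable def phi (K : Type*) [Field K] (s : ℕ) :
    MvPolynomial (Fin s) K →ₐ[K] Polynomial K :=
  aeval (fun i : Fin s => if (i : ℕ) = 0 then Polynomial.X else 0)

noncomputable def psi (K : Type*) [Field K] (s : ℕ) [NeZero s] :
    Polynomial K →ₐ[K] MvPolynomial (Fin s) K :=
  Polynomial.aeval (X (0 : Fin s))

/-- the ideal generated by the variables t_2, ..., t_s -/
noncomputable def Jvar (K : Type*) [Field K] (s : ℕ) : Ideal (MvPolynomial (Fin s) K) :=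
  Ideal.span {g | ∃ i : Fin s, (i : ℕ) ≠ 0 ∧ g = X i}

/-- the irrelevant maximal ideal -/
noncomputable def Mvar (K : Type*) [Field K] (s : ℕ) : Ideal (MvPolynomial (Fin s) K) :=
  Ideal.span {g | ∃ i : Fin s, g = X i}

lemma phi_comp_psi [NeZero s] (p : Polynomial K) : phi K s (psi K s p) = p := by
  have : (phi K s).comp (psi K s) = AlgHom.id K (Polynomial K) := by
    apply Polynomial.algHom_ext
    simp [phi, psi]
  calc phi K s (psi K s p) = ((phi K s).comp (psi K s)) p := rfl
    _ = p := by rw [this]; rfl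

lemma phi_surjective [NeZero s] : Function.Surjective (phi K s) :=
  fun p => ⟨psi K s p, phi_comp_psi p⟩

lemma sub_psi_phi_mem [NeZero s] (f : MvPolynomial (Fin s) K) :
    f - psi K s (phi K s f) ∈ Jvar K s := by
  induction f using MvPolynomial.induction_on with
  | C a => simp [phi, psi]
  | add p q hp hq =>
      have : p + q - psi K s (phi K s (p + q)) =
          (p - psi K s (phi K s p)) + (q - psi K s (phi K s q)) := by
        rw [map_add, map_add]; ring
      rw [this]; exact Ideal.add_mem _ hp hq
  | mul_X p i hp =>
      by_cases h : (i : ℕ) = 0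
      · have hi : i = 0 := by simp [Fin.ext_iff, h]
        have hXi : psi K s (phi K s (X i)) = X i := by
          simp [phi, psi, h, hi]
        have : p * X i - psi K s (phi K s (p * X i)) =
            (p - psi K s (phi K s p)) * X i := by
          rw [map_mul, map_mul, hXi]; ring
        rw [this]
        exact Ideal.mul_mem_right _ _ hp
      · have hXi : phi K s (X i : MvPolynomial (Fin s) K) = 0 := by simp [phi, h, Fin.val_eq_zero_iff.not.mp h]
        have : p * X i - psi K s (phi K s (p * X i)) = p * X i := by
          rw [map_mul, hXi, mul_zero, map_zero, sub_zero]
        rw [this]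
        exact Ideal.mul_mem_left _ _ (Ideal.subset_span ⟨i, h, rfl⟩)

lemma ker_phi [NeZero s] : RingHom.ker (phi K s) = Jvar K s := by
  apply le_antisymm
  · intro f hf
    have h0 : phi K s f = 0 := hf
    have := sub_psi_phi_mem (K := K) (s := s) f
    rwa [h0, map_zero, sub_zero] at this
  · refine Ideal.span_le.mpr ?_
    rintro g ⟨i, hi, rfl⟩
    simp [RingHom.mem_ker, phi, hi, Fin.val_eq_zero_iff.not.mp hi]

noncomputable def ev0 (K : Type*) [Field K] (s : ℕ) :
    MvPolynomial (Fin s) K →ₐ[K] K :=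
  MvPolynomial.aeval (fun _ : Fin s => (0 : K))

lemma sub_constant_mem (f : MvPolynomial (Fin s) K) :
    f - MvPolynomial.C (ev0 K s f) ∈ Mvar K s := by
  induction f using MvPolynomial.induction_on with
  | C a => simp [ev0]
  | add p q hp hq =>
      have : p + q - MvPolynomial.C (ev0 K s (p + q)) =
          (p - MvPolynomial.C (ev0 K s p)) + (q - MvPolynomial.C (ev0 K s q)) := by
        rw [map_add, map_add]; ring
      rw [this]; exact Ideal.add_mem _ hp hq
  | mul_X p i hp =>
      have : p * X i - MvPolynomial.C (ev0 K s (p * X i)) = p * X i := by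
        simp [ev0]
      rw [this]
      exact Ideal.mul_mem_left _ _ (Ideal.subset_span ⟨i, rfl⟩)

lemma ker_aeval_zero : RingHom.ker (ev0 K s) = Mvar K s := by
  apply le_antisymm
  · intro f hf
    have h0 : ev0 K s f = 0 := hf
    have := sub_constant_mem (K := K) (s := s) f
    rwa [h0, map_zero, sub_zero] at this
  · refine Ideal.span_le.mpr ?_
    rintro g ⟨i, rfl⟩
    simp [RingHom.mem_ker, ev0]

lemma Jvar_isPrime [NeZero s] : (Jvar K s).IsPrime := by
  rw [← ker_phi]
  exact RingHom.ker_isPrime _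

lemma Mvar_isPrime : (Mvar K s).IsPrime := by
  rw [← ker_aeval_zero (K := K) (s := s)]
  exact RingHom.ker_isPrime _

lemma Jvar_lt_Mvar [NeZero s] : Jvar K s < Mvar K s := by
  constructor
  · refine Ideal.span_le.mpr ?_
    rintro g ⟨i, hi, rfl⟩
    exact Ideal.subset_span ⟨i, rfl⟩
  · intro h
    have hX0 : (X (0 : Fin s) : MvPolynomial (Fin s) K) ∈ Mvar K s :=
      Ideal.subset_span ⟨0, rfl⟩
    have := h hX0
    rw [← ker_phi] at this
    have : phi K s (X (0 : Fin s) : MvPolynomial (Fin s) K) = 0 := this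
    simp [phi] at this

lemma ringKrullDim_eq_one [NeZero s] (G : Set (Fin s →₀ ℕ))
    (hG1 : ∀ e ∈ G, ∃ i : Fin s, (i : ℕ) ≠ 0 ∧ 1 ≤ e i)
    (hG2 : ∀ i : Fin s, (i : ℕ) ≠ 0 → ∃ n : ℕ, Finsupp.single i n ∈ G)
    (I : Ideal (MvPolynomial (Fin s) K))
    (hI : I = Ideal.span ((fun e => monomial e (1 : K)) '' G)) :
    ringKrullDim (MvPolynomial (Fin s) K ⧸ I) = 1 := by
  -- I ≤ Jvar
  have hIJ : I ≤ Jvar K s := by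
    rw [hI]
    refine Ideal.span_le.mpr ?_
    rintro g ⟨e, he, rfl⟩
    obtain ⟨i, hi, hei⟩ := hG1 e he
    have hsplit : e = Finsupp.single i 1 + (e - Finsupp.single i 1) := by
      ext j
      rcases eq_or_ne j i with rfl | hji
      · simp [Finsupp.single_apply, Finsupp.tsub_apply]
        try omega
      · simp [Finsupp.single_apply, Finsupp.tsub_apply, Ne.symm hji]
    have : (monomial e (1 : K)) = X i * monomial (e - Finsupp.single i 1) 1 := by
      rw [X, monomial_mul, ← hsplit, one_mul]
    show (monomial e) (1:K) ∈ (Jvar K s : Set _)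
    rw [SetLike.mem_coe, this]
    exact Ideal.mul_mem_right _ _ (Ideal.subset_span ⟨i, hi, rfl⟩)
  have hIM : I ≤ Mvar K s := le_trans hIJ (le_of_lt Jvar_lt_Mvar)
  -- every prime over I contains Jvar
  have hprime_J : ∀ p : Ideal (MvPolynomial (Fin s) K), p.IsPrime → I ≤ p → Jvar K s ≤ p := by
    intro p hp hIp
    refine Ideal.span_le.mpr ?_
    rintro g ⟨i, hi, rfl⟩
    obtain ⟨n, hn⟩ := hG2 i hi
    have : (X i : MvPolynomial (Fin s) K) ^ n ∈ p := by
      rw [X_pow_eq_monomial]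
      exact hIp (hI ▸ Ideal.subset_span ⟨Finsupp.single i n, hn, rfl⟩)
    exact hp.mem_of_pow_mem n this
  haveI : (Jvar K s).IsPrime := Jvar_isPrime
  haveI : (Mvar K s).IsPrime := Mvar_isPrime
  have hsurj : Function.Surjective (Ideal.Quotient.mk I) := Ideal.Quotient.mk_surjective
  -- the two primes of the quotient
  haveI hq1 : (Ideal.map (Ideal.Quotient.mk I) (Jvar K s)).IsPrime :=
    Ideal.map_isPrime_of_surjective hsurj (by rwa [Ideal.mk_ker])
  haveI hq2 : (Ideal.map (Ideal.Quotient.mk I) (Mvar K s)).IsPrime :=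
    Ideal.map_isPrime_of_surjective hsurj (by rwa [Ideal.mk_ker])
  have hq12 : (⟨_, hq1⟩ : PrimeSpectrum (MvPolynomial (Fin s) K ⧸ I))
      < (⟨_, hq2⟩ : PrimeSpectrum (MvPolynomial (Fin s) K ⧸ I)) := by
    rw [← PrimeSpectrum.asIdeal_lt_asIdeal]
    constructor
    · exact Ideal.map_mono (le_of_lt Jvar_lt_Mvar)
    · intro hle
      have h1 : Ideal.comap (Ideal.Quotient.mk I) (Ideal.map (Ideal.Quotient.mk I) (Jvar K s))
          = Jvar K s := by
        rw [Ideal.comap_map_of_surjective _ hsurj, ← RingHom.ker_eq_comap_bot, Ideal.mk_ker, sup_eq_left.mpr hIJ]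
      have h2 : Ideal.comap (Ideal.Quotient.mk I) (Ideal.map (Ideal.Quotient.mk I) (Mvar K s))
          = Mvar K s := by
        rw [Ideal.comap_map_of_surjective _ hsurj, ← RingHom.ker_eq_comap_bot, Ideal.mk_ker, sup_eq_left.mpr hIM]
      have : Mvar K s ≤ Jvar K s := by
        rw [← h1, ← h2]
        exact Ideal.comap_mono hle
      exact absurd (lt_of_lt_of_le Jvar_lt_Mvar this).false id
  apply le_antisymm
  · -- upper bound
    haveI : Nonempty (PrimeSpectrum (MvPolynomial (Fin s) K ⧸ I)) := ⟨⟨_, hq1⟩⟩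
    rw [ringKrullDim, Order.krullDim_eq_iSup_length]
    change _ ≤ ((1 : ℕ∞) : WithBot ℕ∞)
    refine WithBot.coe_le_coe.mpr ?_
    apply iSup_le
    intro l
    by_contra hlen
    push_neg at hlen
    have hlen2 : 2 ≤ l.length := by
      by_contra hc
      push_neg at hc
      exact absurd hlen (not_lt.mpr (by exact_mod_cast Nat.le_of_lt_succ hc))
    -- three primes in the quotient
    set x0 := l.toFun ⟨0, by omega⟩
    set x1 := l.toFun ⟨1, by omega⟩
    set x2 := l.toFun ⟨2, by omega⟩
    have h01 : x0 < x1 := l.strictMono (by simp [Fin.lt_def])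
    have h12 : x1 < x2 := l.strictMono (by simp [Fin.lt_def])
    -- pull back to S
    set p0 := Ideal.comap (Ideal.Quotient.mk I) x0.asIdeal
    set p1 := Ideal.comap (Ideal.Quotient.mk I) x1.asIdeal
    set p2 := Ideal.comap (Ideal.Quotient.mk I) x2.asIdeal
    haveI hp0 : p0.IsPrime := Ideal.IsPrime.comap _
    haveI hp1 : p1.IsPrime := Ideal.IsPrime.comap _
    haveI hp2 : p2.IsPrime := Ideal.IsPrime.comap _
    have hcomap_lt : ∀ A B : Ideal (MvPolynomial (Fin s) K ⧸ I), A < B →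
        Ideal.comap (Ideal.Quotient.mk I) A < Ideal.comap (Ideal.Quotient.mk I) B := by
      intro A B hAB
      constructor
      · exact Ideal.comap_mono (le_of_lt hAB)
      · intro hle
        have : B ≤ A := by
          rw [← Ideal.map_comap_of_surjective _ hsurj A, ← Ideal.map_comap_of_surjective _ hsurj B]
          exact Ideal.map_mono hle
        exact absurd (lt_of_lt_of_le hAB this).false id
    have hI0 : I ≤ p0 := by
      rw [← Ideal.mk_ker (I := I)]
      exact Ideal.ker_le_comap _
    have hI1 : I ≤ p1 := by
      rw [← Ideal.mk_ker (I := I)]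
      exact Ideal.ker_le_comap _
    have hI2 : I ≤ p2 := by
      rw [← Ideal.mk_ker (I := I)]
      exact Ideal.ker_le_comap _
    -- push forward to Polynomial K
    have hφ := phi_surjective (K := K) (s := s)
    have hkerφ : RingHom.ker (phi K s) = Jvar K s := ker_phi
    haveI hP0 : (Ideal.map (phi K s) p0).IsPrime :=
      Ideal.map_isPrime_of_surjective hφ (hkerφ ▸ hprime_J p0 hp0 hI0)
    haveI hP1 : (Ideal.map (phi K s) p1).IsPrime :=
      Ideal.map_isPrime_of_surjective hφ (hkerφ ▸ hprime_J p1 hp1 hI1)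
    haveI hP2 : (Ideal.map (phi K s) p2).IsPrime :=
      Ideal.map_isPrime_of_surjective hφ (hkerφ ▸ hprime_J p2 hp2 hI2)
    have hmap_lt : ∀ A B : Ideal (MvPolynomial (Fin s) K), A.IsPrime → I ≤ A → A < B →
        Ideal.map (phi K s) A < Ideal.map (phi K s) B := by
      intro A B hA hIA hAB
      constructor
      · exact Ideal.map_mono (le_of_lt hAB)
      · intro hle
        have hcm : Ideal.comap (phi K s) (Ideal.map (phi K s) A) = A := by
          rw [Ideal.comap_map_of_surjective _ hφ, ← RingHom.ker_eq_comap_bot, hkerφ]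
          exact sup_eq_left.mpr (hprime_J A hA hIA)
        have : B ≤ Ideal.comap (phi K s) (Ideal.map (phi K s) A) := by
          exact le_trans Ideal.le_comap_map (Ideal.comap_mono hle)
        rw [hcm] at this
        exact absurd (lt_of_lt_of_le hAB this).false id
    have hlt01 : Ideal.map (phi K s) p0 < Ideal.map (phi K s) p1 :=
      hmap_lt p0 p1 hp0 hI0 (hcomap_lt _ _ h01)
    have hlt12 : Ideal.map (phi K s) p1 < Ideal.map (phi K s) p2 :=
      hmap_lt p1 p2 hp1 hI1 (hcomap_lt _ _ h12)
    -- PID contradiction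
    rcases eq_or_ne (Ideal.map (phi K s) p0) ⊥ with h0 | h0
    · have hne : Ideal.map (phi K s) p1 ≠ ⊥ := by
        intro h; rw [h, h0] at hlt01; exact hlt01.false
      have hmax := IsPrime.to_maximal_ideal (S := Ideal.map (phi K s) p1) hne
      exact hP2.ne_top (hmax.1.2 _ hlt12)
    · have hmax := IsPrime.to_maximal_ideal (S := Ideal.map (phi K s) p0) h0
      exact hP1.ne_top (hmax.1.2 _ hlt01)
  · -- lower bound
    haveI : Nonempty (PrimeSpectrum (MvPolynomial (Fin s) K ⧸ I)) := ⟨⟨_, hq1⟩⟩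
    have := Order.LTSeries.length_le_krullDim
      (⟨1, ![⟨_, hq1⟩, ⟨_, hq2⟩], by
        intro i
        fin_cases i
        simpa using hq12⟩ : LTSeries (PrimeSpectrum (MvPolynomial (Fin s) K ⧸ I)))
    simp at this; exact this

lemma epsilon_eq_of {P : ℕ → Prop} {C : ℕ} (hC : P C) (huniq : ∀ D, P D → D = C) :
    Classical.epsilon P = C :=
  huniq _ (Classical.epsilon_spec ⟨C, hC⟩)

lemma krullDimQ_eq_one {I : Ideal (MvPolynomial (Fin s) K)}
    (h : ringKrullDim (MvPolynomial (Fin s) K ⧸ I) = 1) : krullDimQ K s I = 1 := by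
  rw [krullDimQ, h]
  rfl

lemma degQ_eq_of_eventually {I : Ideal (MvPolynomial (Fin s) K)}
    (hdim : krullDimQ K s I = 1) {C N : ℕ}
    (hC : ∀ d : ℕ, N ≤ d → hilbertFn K s I d = C) : degQ K s I = C := by
  rw [degQ, if_neg (by rw [hdim]; exact one_ne_zero)]
  have hten : Tendsto (fun d : ℕ => (hilbertFn K s I d : ℝ)) atTop (nhds (C : ℝ)) := by
    apply Tendsto.congr' _ tendsto_const_nhds
    filter_upwards [eventually_ge_atTop N] with d hd
    rw [hC d hd]
  apply epsilon_eq_of (C := C)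
  · simp only [hdim]
    simpa using hten
  · intro D hD
    simp only [hdim] at hD
    simp only [Nat.sub_self, pow_zero, div_one, Nat.factorial_zero, Nat.cast_one] at hD
    exact_mod_cast tendsto_nhds_unique hD hten

end Aux


/-- Degree formula for `S/(L, t^a)` when `L = (t_2^{d_2}, …, t_s^{d_s})`. -/
theorem degQ_sup_monomial
    {K : Type*} [Field K] {s : ℕ} (hs : 2 ≤ s) (d : Fin s → ℕ)
    (hd : ∀ i : Fin s, (i : ℕ) ≠ 0 → 1 ≤ d i)
    (L : Ideal (MvPolynomial (Fin s) K))
    (hL : L = Ideal.span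
      { g | ∃ i : Fin s, (i : ℕ) ≠ 0 ∧ g = (X i : MvPolynomial (Fin s) K) ^ d i })
    (a : Fin s →₀ ℕ) (r : Fin s) (hr0 : (r : ℕ) ≠ 0) (har : 1 ≤ a r)
    (hup : ∀ i, r ≤ i → a i ≤ d i - 1)
    (hmid : ∀ i : Fin s, (i : ℕ) ≠ 0 → i < r → a i = 0) :
    degQ K s (L ⊔ Ideal.span {(monomial a (1 : K) : MvPolynomial (Fin s) K)}) =
      degQ K s (L ⊔ Ideal.span
        {(monomial (a.filter (fun i => r ≤ i)) (1 : K) : MvPolynomial (Fin s) K)}) ∧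
    degQ K s (L ⊔ Ideal.span {(monomial a (1 : K) : MvPolynomial (Fin s) K)}) =
      (∏ i ∈ Finset.univ.filter (fun i : Fin s => (i : ℕ) ≠ 0), d i) -
        (∏ i ∈ Finset.univ.filter (fun i : Fin s => (i : ℕ) ≠ 0 ∧ i < r), d i) *
          ∏ i ∈ Finset.univ.filter (fun i : Fin s => r ≤ i), (d i - a i) := by
  haveI : NeZero s := ⟨by omega⟩
  classical
  set S1 : Set (Fin s →₀ ℕ) :=
    {e | ∃ i : Fin s, (i : ℕ) ≠ 0 ∧ e = Finsupp.single i (d i)} with hS1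
  set a' := a.filter (fun i => r ≤ i) with ha'
  have ha'apply : ∀ i : Fin s, a' i = if r ≤ i then a i else 0 := by
    intro i
    simp [ha', Finsupp.filter_apply]
  -- the two ideals are spanned by monomials
  have hunion : ∀ b : Fin s →₀ ℕ,
      L ⊔ Ideal.span {(monomial b (1 : K) : MvPolynomial (Fin s) K)}
        = Ideal.span ((fun e => monomial e (1 : K)) '' (S1 ∪ {b})) := by
    intro b
    rw [hL, ← Ideal.span_union, Set.image_union, Set.image_singleton]
    congr 2
    ext g
    simp only [hS1, Set.mem_setOf_eq, Set.mem_image]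
    constructor
    · rintro ⟨i, hi, rfl⟩
      exact ⟨Finsupp.single i (d i), ⟨i, hi, rfl⟩, X_pow_eq_monomial.symm⟩
    · rintro ⟨e, ⟨i, hi, rfl⟩, rfl⟩
      exact ⟨i, hi, X_pow_eq_monomial.symm⟩
  -- bounds on a and a'
  have hb : ∀ i : Fin s, (i : ℕ) ≠ 0 → a i < d i := by
    intro i hi
    rcases le_or_gt r i with h | h
    · have := hup i h; have := hd i hi; omega
    · rw [hmid i hi h]; exact Nat.lt_of_lt_of_le Nat.one_pos (hd i hi)
  have hb' : ∀ i : Fin s, (i : ℕ) ≠ 0 → a' i < d i := by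
    intro i hi
    rw [ha'apply]
    split
    · exact hb i hi
    · exact Nat.lt_of_lt_of_le Nat.one_pos (hd i hi)
  have ha'0 : a' 0 = 0 := by
    rw [ha'apply, if_neg]
    intro h
    exact hr0 (Nat.le_zero.mp h)
  -- generator conditions for the dimension lemma
  have hG1 : ∀ b : Fin s →₀ ℕ, 1 ≤ b r →
      ∀ e ∈ S1 ∪ {b}, ∃ i : Fin s, (i : ℕ) ≠ 0 ∧ 1 ≤ e i := by
    intro b hbr e he
    rcases he with ⟨i, hi, rfl⟩ | rfl
    · exact ⟨i, hi, by simp [Finsupp.single_apply]; exact hd i hi⟩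
    · exact ⟨r, hr0, hbr⟩
  have hG2 : ∀ b : Fin s →₀ ℕ, ∀ i : Fin s, (i : ℕ) ≠ 0 →
      ∃ n : ℕ, Finsupp.single i n ∈ S1 ∪ {b} := by
    intro b i hi
    exact ⟨d i, Or.inl ⟨i, hi, rfl⟩⟩
  have ha'r : 1 ≤ a' r := by rw [ha'apply, if_pos le_rfl]; exact har
  -- Krull dimensions
  have hdim : ∀ b : Fin s →₀ ℕ, 1 ≤ b r →
      krullDimQ K s (L ⊔ Ideal.span {(monomial b (1 : K) : MvPolynomial (Fin s) K)}) = 1 := by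
    intro b hbr
    exact krullDimQ_eq_one (ringKrullDim_eq_one (S1 ∪ {b}) (hG1 b hbr) (hG2 b) _ (hunion b))
  -- product values
  set Pfull := ∏ i ∈ Finset.univ.filter (fun i : Fin s => (i : ℕ) ≠ 0), d i with hPfull
  set Psub := ∏ i ∈ Finset.univ.filter (fun i : Fin s => (i : ℕ) ≠ 0), (d i - a i) with hPsub
  have hprod' : ∏ i ∈ Finset.univ.filter (fun i : Fin s => (i : ℕ) ≠ 0), (d i - a' i)
      = Psub := by
    apply Finset.prod_congr rfl
    intro i hi
    rw [Finset.mem_filter] at hi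
    rw [ha'apply]
    split
    · rfl
    · rw [hmid i hi.2 (lt_of_not_ge (by assumption))]
  -- Hilbert functions are eventually constant
  set N := a 0 + ∑ i ∈ Finset.univ.filter (fun i : Fin s => (i : ℕ) ≠ 0), (d i - 1) with hN
  have hev : ∀ dd : ℕ, N ≤ dd →
      hilbertFn K s (L ⊔ Ideal.span {(monomial a (1 : K) : MvPolynomial (Fin s) K)}) dd
        = Pfull - Psub := by
    intro dd hdd
    rw [hunion a, hilbertFn_span_monomials, card_stdF d a hb hdd]
  have hev' : ∀ dd : ℕ, N ≤ dd →
      hilbertFn K s (L ⊔ Ideal.span {(monomial a' (1 : K) : MvPolynomial (Fin s) K)}) dd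
        = Pfull - Psub := by
    intro dd hdd
    rw [hunion a', hilbertFn_span_monomials, card_stdF d a' hb' (by rw [ha'0]; omega), hprod']
  -- degrees
  have hdeg : degQ K s (L ⊔ Ideal.span {(monomial a (1 : K) : MvPolynomial (Fin s) K)})
      = Pfull - Psub := degQ_eq_of_eventually (hdim a har) hev
  have hdeg' : degQ K s (L ⊔ Ideal.span {(monomial a' (1 : K) : MvPolynomial (Fin s) K)})
      = Pfull - Psub := degQ_eq_of_eventually (hdim a' ha'r) hev'
  -- splitting the product
  have hsplit : Psub = (∏ i ∈ Finset.univ.filter (fun i : Fin s => (i : ℕ) ≠ 0 ∧ i < r), d i) *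
      ∏ i ∈ Finset.univ.filter (fun i : Fin s => r ≤ i), (d i - a i) := by
    have hfil : Finset.univ.filter (fun i : Fin s => (i : ℕ) ≠ 0)
        = Finset.univ.filter (fun i : Fin s => (i : ℕ) ≠ 0 ∧ i < r)
          ∪ Finset.univ.filter (fun i : Fin s => r ≤ i) := by
      ext i
      simp only [Finset.mem_filter, Finset.mem_union, Finset.mem_univ, true_and]
      constructor
      · intro hi
        rcases le_or_gt r i with h | h
        · exact Or.inr h
        · exact Or.inl ⟨hi, h⟩
      · rintro (⟨hi, -⟩ | h)
        · exact hi
        · intro h0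
          have : i = 0 := by simp [Fin.ext_iff, h0]
          subst this
          exact hr0 (Nat.le_zero.mp h)
    have hdisj : Disjoint (Finset.univ.filter (fun i : Fin s => (i : ℕ) ≠ 0 ∧ i < r))
        (Finset.univ.filter (fun i : Fin s => r ≤ i)) := by
      rw [Finset.disjoint_left]
      intro i hi1 hi2
      rw [Finset.mem_filter] at hi1 hi2
      exact absurd (lt_of_le_of_lt hi2.2 hi1.2.2).false id
    rw [hPsub, hfil, Finset.prod_union hdisj]
    congr 1
    apply Finset.prod_congr rfl
    intro i hi
    rw [Finset.mem_filter] at hi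
    rw [hmid i hi.2.1 hi.2.2]
    omega
  exact ⟨hdeg.trans hdeg'.symm, by rw [hdeg, hsplit]⟩


end MDF
end
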